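/- Let G be a graph with at least one edge whose cut monoid M_G is normal. Then: (a) if G is bipartite, then m(G) = 2; (b) if G contains no triangle but has an induced cycle of odd length, then m(G) ≥ 3; (c) if G contains a triangle, then m(G) = 4. (Via the Danilov–Stanley description of the canonical module, these are equivalent to reg K[G] = |E| − 1, reg K[G] ≤ |E| − 2, and reg K[G] = |E| − 3, respectively.) -/

import Mathlib

/-! Basic definitions for cut monoids of finite simple graphs. -/

open Classical in
/-- The cut vector of a vertex set `A`, as a function on `Sym2 V`:
value `1` on pairs with exactly one element in `A`, and `0` otherwise. -/
noncomputable def cutVec {V : Type} (A : Set V) : Sym2 V → ℤ :=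
  Sym2.lift ⟨fun v w => if ((v ∈ A) ↔ (w ∈ A)) then 0 else 1,
    fun v w => if_congr iff_comm rfl rfl⟩

variable {V : Type}

/-- The generators `(δ_A, 1)` of the cut monoid of `G`. -/
def cutGens (G : SimpleGraph V) : Set ((G.edgeSet → ℤ) × ℤ) :=
  {p | ∃ A : Set V, p = (fun e => cutVec A e.1, 1)}

/-- The cut monoid `M_G` of a graph `G`. -/
def cutMonoid (G : SimpleGraph V) : AddSubmonoid ((G.edgeSet → ℤ) × ℤ) :=
  AddSubmonoid.closure (cutGens G)

/-- The group `gp(M_G)` generated by the cut monoid. -/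
def cutGroup (G : SimpleGraph V) : AddSubgroup ((G.edgeSet → ℤ) × ℤ) :=
  AddSubgroup.closure (cutGens G)

/-- `M_G` is normal: every `x ∈ gp(M_G)` with `n • x ∈ M_G` for some `n ≥ 1` lies in `M_G`. -/
def CutNormal (G : SimpleGraph V) : Prop :=
  ∀ x ∈ cutGroup G, (∃ n : ℕ, 1 ≤ n ∧ n • x ∈ cutMonoid G) → x ∈ cutMonoid G

/-- `M_G` is seminormal: every `x ∈ gp(M_G)` with `2 • x ∈ M_G` and `3 • x ∈ M_G`
lies in `M_G`. -/
def CutSeminormal (G : SimpleGraph V) : Prop :=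
  ∀ x ∈ cutGroup G, 2 • x ∈ cutMonoid G → 3 • x ∈ cutMonoid G → x ∈ cutMonoid G

/-- Generators of the cone of `M_G`: nonnegative real multiples of the `(δ_A, 1)`. -/
noncomputable def cutConeGens (G : SimpleGraph V) : Set ((G.edgeSet → ℝ) × ℝ) :=
  {q | ∃ (c : ℝ) (A : Set V), 0 ≤ c ∧
    q = c • ((fun e => ((cutVec A e.1 : ℤ) : ℝ), (1 : ℝ)))}

/-- The cone `cone(M_G)`: all finite nonnegative real combinations of the `(δ_A, 1)`. -/
noncomputable def cutCone (G : SimpleGraph V) : Set ((G.edgeSet → ℝ) × ℝ) :=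
  (AddSubmonoid.closure (cutConeGens G) : Set ((G.edgeSet → ℝ) × ℝ))

/-- The canonical map from `ℤ^E × ℤ` to `ℝ^E × ℝ`. -/
noncomputable def toRealCut (G : SimpleGraph V) (p : (G.edgeSet → ℤ) × ℤ) :
    (G.edgeSet → ℝ) × ℝ :=
  (fun e => ((p.1 e : ℤ) : ℝ), ((p.2 : ℤ) : ℝ))

/-- `int(M_G)`: elements of `M_G` mapping into the topological interior of `cone(M_G)`. -/
noncomputable def cutInterior (G : SimpleGraph V) : Set ((G.edgeSet → ℤ) × ℤ) :=
  {p | p ∈ cutMonoid G ∧ toRealCut G p ∈ interior (cutCone G)}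

/-- The set of last coordinates `α ∈ ℕ` realized by elements of `int(M_G)`;
its least element is `m(G)`. -/
noncomputable def cutDegrees (G : SimpleGraph V) : Set ℕ :=
  {α | ∃ x : G.edgeSet → ℤ, ((x, (α : ℤ)) : (G.edgeSet → ℤ) × ℤ) ∈ cutInterior G}

/-- `H` is a minor of `G`: branch sets `B u` are nonempty, pairwise disjoint,
induce connected subgraphs, and edges of `H` are witnessed by edges of `G`. -/
def GraphMinor {W V : Type} (H : SimpleGraph W) (G : SimpleGraph V) : Prop :=
  ∃ B : W → Set V,
    (∀ u, (B u).Nonempty) ∧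
    (∀ u v, u ≠ v → Disjoint (B u) (B v)) ∧
    (∀ u, (G.induce (B u)).Connected) ∧
    (∀ u v, H.Adj u v → ∃ a ∈ B u, ∃ b ∈ B v, G.Adj a b)

/-- `G` is `K₅`-minor-free. -/
def K5Free (G : SimpleGraph V) : Prop :=
  ¬ GraphMinor (⊤ : SimpleGraph (Fin 5)) G

/-- `G` is bipartite: vertices split into two parts so every edge joins the parts. -/
def BipartiteG (G : SimpleGraph V) : Prop :=
  ∃ s : Set V, ∀ ⦃v w⦄, G.Adj v w → ((v ∈ s ∧ w ∉ s) ∨ (w ∈ s ∧ v ∉ s))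

/-- `G` has an induced cycle of length `n` (n ≥ 3): an induced-subgraph copy of the
cycle graph of length `n`. -/
def HasInducedCycleLen (G : SimpleGraph V) (n : ℕ) : Prop :=
  3 ≤ n ∧ Nonempty (SimpleGraph.cycleGraph n ↪g G)

/-- `G` contains a triangle. -/
def HasTriangle (G : SimpleGraph V) : Prop :=
  ∃ a b c, G.Adj a b ∧ G.Adj b c ∧ G.Adj a c

/-- `G` is chordal: every induced cycle is a triangle. -/
def ChordalG (G : SimpleGraph V) : Prop :=
  ∀ n, HasInducedCycleLen G n → n = 3

/-- `G` is bridgeless: every edge lies on some cycle. -/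
def BridgelessG (G : SimpleGraph V) : Prop :=
  ∀ e ∈ G.edgeSet, ∃ (v : V) (c : G.Walk v v), c.IsCycle ∧ e ∈ c.edges

/-- `G` is (isomorphic to) a cycle of length `n`. -/
def IsCycleOfLen (G : SimpleGraph V) (n : ℕ) : Prop :=
  3 ≤ n ∧ Nonempty (G ≃g SimpleGraph.cycleGraph n)

/-- `G` is a cycle. -/
def IsCycleGraph (G : SimpleGraph V) : Prop :=
  ∃ n, IsCycleOfLen G n

/-- `G` is a `0`-sum of `G1` and `G2`: copies of `G1`, `G2` cover `G`,
overlap in exactly one vertex, and every edge comes from `G1` or `G2`. -/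
def IsZeroSumDecomp {V1 V2 : Type} (G : SimpleGraph V) (G1 : SimpleGraph V1)
    (G2 : SimpleGraph V2) : Prop :=
  ∃ (f1 : V1 ↪ V) (f2 : V2 ↪ V),
    Set.range f1 ∪ Set.range f2 = Set.univ ∧
    (∃ v, Set.range f1 ∩ Set.range f2 = {v}) ∧
    (∀ a b, G.Adj a b ↔
      ((∃ x y, f1 x = a ∧ f1 y = b ∧ G1.Adj x y) ∨
       (∃ x y, f2 x = a ∧ f2 y = b ∧ G2.Adj x y)))

/-- `G` is a `1`-sum of `G1` and `G2` along a common edge. -/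
def IsOneSumDecomp {V1 V2 : Type} (G : SimpleGraph V) (G1 : SimpleGraph V1)
    (G2 : SimpleGraph V2) : Prop :=
  ∃ (f1 : V1 ↪ V) (f2 : V2 ↪ V) (v w : V),
    v ≠ w ∧
    Set.range f1 ∪ Set.range f2 = Set.univ ∧
    Set.range f1 ∩ Set.range f2 = {v, w} ∧
    (∃ x y, f1 x = v ∧ f1 y = w ∧ G1.Adj x y) ∧
    (∃ x y, f2 x = v ∧ f2 y = w ∧ G2.Adj x y) ∧
    (∀ a b, G.Adj a b ↔
      ((∃ x y, f1 x = a ∧ f1 y = b ∧ G1.Adj x y) ∨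
       (∃ x y, f2 x = a ∧ f2 y = b ∧ G2.Adj x y)))

/-- Ring graphs: obtained, up to adding isolated vertices, from finitely many
(finite) trees and cycles by iterated `0`-sums and `1`-sums. -/
inductive IsRingGraph : {V : Type} → SimpleGraph V → Prop
  | tree {V : Type} (G : SimpleGraph V) :
      Finite V → G.Connected → G.IsAcyclic → IsRingGraph G
  | cycle {V : Type} (G : SimpleGraph V) : IsCycleGraph G → IsRingGraph G
  | zeroSum {V1 V2 V : Type} {G1 : SimpleGraph V1} {G2 : SimpleGraph V2}
      {G : SimpleGraph V} :
      IsRingGraph G1 → IsRingGraph G2 → IsZeroSumDecomp G G1 G2 → IsRingGraph G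
  | oneSum {V1 V2 V : Type} {G1 : SimpleGraph V1} {G2 : SimpleGraph V2}
      {G : SimpleGraph V} :
      IsRingGraph G1 → IsRingGraph G2 → IsOneSumDecomp G G1 G2 → IsRingGraph G
  | addIsolated {V W : Type} {G : SimpleGraph V} {H : SimpleGraph W} (f : V ↪ W) :
      IsRingGraph G → (∀ a b, H.Adj a b ↔ ∃ x y, f x = a ∧ f y = b ∧ G.Adj x y) →
      IsRingGraph H

/-- An edge of an induced subgraph is an edge of the ambient graph. -/
lemma induce_edge_mem (G : SimpleGraph V) (s : Set V) (e : Sym2 s)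
    (he : e ∈ (G.induce s).edgeSet) : e.map Subtype.val ∈ G.edgeSet := by
  induction e using Sym2.ind with
  | _ a b =>
    rw [Sym2.map_pair_eq, SimpleGraph.mem_edgeSet]
    exact he

/-- Restriction of a vector indexed by the edges of `G` to the edges of the
subgraph of `G` induced on `s`. -/
noncomputable def restrictCut (G : SimpleGraph V) (s : Set V) (p : G.edgeSet → ℤ) :
    (G.induce s).edgeSet → ℤ :=
  fun e => p ⟨e.1.map Subtype.val, induce_edge_mem G s e.1 e.2⟩

section Aux
open Classical
variable {V : Type} [Fintype V] {G : SimpleGraph V}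

noncomputable instance : Fintype G.edgeSet := Fintype.ofFinite _

lemma cutVec_mk (A : Set V) (x y : V) :
    cutVec A s(x,y) = if (x ∈ A ↔ y ∈ A) then 0 else 1 := by simp [cutVec]

lemma cutVec_nonneg (A : Set V) (e : Sym2 V) : 0 ≤ cutVec A e := by
  induction e using Sym2.ind with
  | _ x y => rw [cutVec_mk]; split <;> omega

lemma cutVec_le_one (A : Set V) (e : Sym2 V) : cutVec A e ≤ 1 := by
  induction e using Sym2.ind with
  | _ x y => rw [cutVec_mk]; split <;> omega

lemma cutVec_empty (e : Sym2 V) : cutVec (∅ : Set V) e = 0 := by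
  induction e using Sym2.ind with
  | _ x y => simp [cutVec_mk]

/-- The real generator vector. -/
noncomputable def gR (G : SimpleGraph V) (A : Set V) : (G.edgeSet → ℝ) × ℝ :=
  (fun e => ((cutVec A e.1 : ℤ) : ℝ), 1)

lemma gR_mem_cone (A : Set V) : gR G A ∈ cutCone G :=
  AddSubmonoid.subset_closure ⟨1, A, zero_le_one, by simp [gR]⟩

lemma smul_gR_mem_cone {c : ℝ} (hc : 0 ≤ c) (A : Set V) : c • gR G A ∈ cutCone G :=
  AddSubmonoid.subset_closure ⟨c, A, hc, by simp [gR]⟩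

lemma cone_nonneg (φ : ((G.edgeSet → ℝ) × ℝ) →ₗ[ℝ] ℝ)
    (hgen : ∀ A : Set V, 0 ≤ φ (gR G A)) :
    ∀ q ∈ cutCone G, 0 ≤ φ q := by
  intro q hq
  have hq' : q ∈ AddSubmonoid.closure (cutConeGens G) := hq
  induction hq' using AddSubmonoid.closure_induction with
  | mem x hx =>
      obtain ⟨c, A, hc, rfl⟩ := hx
      have : ((fun e => ((cutVec A e.1 : ℤ) : ℝ), (1:ℝ)) : (G.edgeSet → ℝ) × ℝ) = gR G A := rfl
      rw [this, map_smul, smul_eq_mul]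
      exact mul_nonneg hc (hgen A)
  | zero => simp
  | add x y hxm hym hx hy => rw [map_add]; exact add_nonneg (hx hxm) (hy hym)

lemma interior_pos (φ : ((G.edgeSet → ℝ) × ℝ) →ₗ[ℝ] ℝ)
    (hgen : ∀ A : Set V, 0 ≤ φ (gR G A))
    (w : (G.edgeSet → ℝ) × ℝ) (hw : 0 < φ w)
    {p : (G.edgeSet → ℝ) × ℝ} (hp : p ∈ interior (cutCone G)) : 0 < φ p := by
  have hnhds : cutCone G ∈ nhds p := mem_interior_iff_mem_nhds.mp hp
  obtain ⟨ε, hε, hball⟩ := Metric.mem_nhds_iff.mp hnhds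
  have hw0 : w ≠ 0 := by rintro rfl; simp at hw
  have hnw : 0 < ‖w‖ := norm_pos_iff.mpr hw0
  set c : ℝ := ε / (2 * ‖w‖) with hc
  have hcpos : 0 < c := by positivity
  have hq : p - c • w ∈ cutCone G := by
    apply hball
    rw [Metric.mem_ball, dist_eq_norm]
    have : p - c • w - p = -(c • w) := by abel
    rw [this, norm_neg, norm_smul, Real.norm_eq_abs, abs_of_pos hcpos]
    rw [hc]
    rw [div_mul_eq_mul_div, mul_comm 2 ‖w‖, ← div_div]
    rw [mul_div_assoc, div_self (ne_of_gt hnw), mul_one]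
    linarith
  have h0 := cone_nonneg φ hgen _ hq
  rw [map_sub, map_smul, smul_eq_mul] at h0
  nlinarith

lemma edge_rep (e : G.edgeSet) : ∃ u v, G.Adj u v ∧ e.1 = s(u,v) := by
  obtain ⟨e, he⟩ := e
  induction e using Sym2.ind with
  | _ x y => exact ⟨x, y, he, rfl⟩

lemma cut_three {u v x y : V} (huv : u ≠ v) (hxy : x ≠ y) :
    cutVec {u} s(x,y) + cutVec {v} s(x,y) - cutVec {u,v} s(x,y)
      = if s(x,y) = s(u,v) then 2 else 0 := by
  rw [cutVec_mk, cutVec_mk, cutVec_mk]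
  simp only [Sym2.eq_iff, Set.mem_singleton_iff, Set.mem_insert_iff]
  by_cases hxu : x = u <;> by_cases hxv : x = v <;> by_cases hyu : y = u <;>
    by_cases hyv : y = v <;> simp_all <;> omega

/-- The linear map sending coefficients to the corresponding combination of generators. -/
noncomputable def Tlin (G : SimpleGraph V) : (Set V → ℝ) →ₗ[ℝ] (G.edgeSet → ℝ) × ℝ :=
  ∑ A : Set V, (LinearMap.proj A).smulRight (gR G A)

lemma Tlin_apply (l : Set V → ℝ) : Tlin G l = ∑ A : Set V, l A • gR G A := by
  simp [Tlin, LinearMap.sum_apply]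

lemma Tlin_surj : Function.Surjective (Tlin G) := by
  have hrange : ∀ A : Set V, gR G A ∈ LinearMap.range (Tlin G) := by
    intro A
    refine ⟨Pi.single A 1, ?_⟩
    rw [Tlin_apply]
    rw [Finset.sum_eq_single A]
    · simp
    · intro B _ hB; rw [Pi.single_eq_of_ne hB]; simp
    · intro h; exact absurd (Finset.mem_univ A) h
  have h01 : ((0, 1) : (G.edgeSet → ℝ) × ℝ) ∈ LinearMap.range (Tlin G) := by
    have : gR G (∅ : Set V) = (0, 1) := by
      apply Prod.ext
      · funext e; simp [gR, cutVec_empty]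
      · rfl
    rw [← this]; exact hrange ∅
  have hsingle : ∀ e : G.edgeSet,
      ((fun f => if f = e then (2:ℝ) else 0, 0) : (G.edgeSet → ℝ) × ℝ)
        ∈ LinearMap.range (Tlin G) := by
    intro e
    obtain ⟨u, v, huv, he⟩ := edge_rep e
    have key : gR G {u} + gR G {v} - gR G {u,v} - gR G ∅
        = ((fun f => if f = e then (2:ℝ) else 0, 0) : (G.edgeSet → ℝ) × ℝ) := by
      apply Prod.ext
      · funext f
        obtain ⟨x, y, hxy, hf⟩ := edge_rep f
        have hxyne : x ≠ y := G.ne_of_adj hxy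
        have hint := cut_three (G.ne_of_adj huv) hxyne
        have hfe : (f = e) ↔ (s(x,y) = s(u,v)) := by
          rw [Subtype.ext_iff, hf, he]
        show ((cutVec {u} f.1 : ℤ):ℝ) + ((cutVec {v} f.1 : ℤ):ℝ)
            - ((cutVec {u,v} f.1 : ℤ):ℝ) - ((cutVec ∅ f.1 : ℤ):ℝ)
            = if f = e then (2:ℝ) else 0
        rw [hf, cutVec_empty, Int.cast_zero, sub_zero]
        have hcast : ((cutVec {u} s(x,y):ℤ):ℝ) + ((cutVec {v} s(x,y):ℤ):ℝ)
            - ((cutVec {u,v} s(x,y):ℤ):ℝ)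
            = (((cutVec {u} s(x,y) + cutVec {v} s(x,y) - cutVec {u,v} s(x,y) : ℤ)):ℝ) := by
          push_cast; ring
        rw [hcast, hint]
        by_cases h : s(x,y) = s(u,v)
        · rw [if_pos h, if_pos (hfe.mpr h)]; norm_num
        · rw [if_neg h, if_neg (fun hh => h (hfe.mp hh))]; norm_num
      · show (1:ℝ) + 1 - 1 - 1 = 0; ring
    rw [← key]
    exact Submodule.sub_mem _ (Submodule.sub_mem _
      (Submodule.add_mem _ (hrange _) (hrange _)) (hrange _)) (hrange _)
  rw [← LinearMap.range_eq_top]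
  rw [Submodule.eq_top_iff']
  intro p
  have hdecomp : p = (∑ e : G.edgeSet,
      (p.1 e / 2) • ((fun f => if f = e then (2:ℝ) else 0, 0) : (G.edgeSet → ℝ) × ℝ))
      + p.2 • ((0,1) : (G.edgeSet → ℝ) × ℝ) := by
    apply Prod.ext
    · simp only [Prod.fst_add, Prod.fst_sum, Prod.smul_fst, Prod.smul_snd]
      funext f
      simp only [Pi.add_apply, Finset.sum_apply, Pi.smul_apply, smul_eq_mul]
      rw [Finset.sum_congr rfl (fun e _ => show (p.1 e / 2) * (if f = e then (2:ℝ) else 0)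
          = if f = e then p.1 e else 0 by split <;> simp_all <;> ring)]
      simp
    · simp only [Prod.snd_add, Prod.snd_sum, Prod.smul_snd]
      simp
  rw [hdecomp]
  exact Submodule.add_mem _
    (Submodule.sum_mem _ (fun e _ => Submodule.smul_mem _ _ (hsingle e)))
    (Submodule.smul_mem _ _ h01)

lemma sum_cutVec {u v : V} (huv : u ≠ v) :
    ∑ A : Set V, cutVec A s(u,v) = 2 ^ (Fintype.card V - 1) := by
  have hinv : Function.Involutive (fun A : Set V => symmDiff A {u}) :=
    fun A => symmDiff_symmDiff_cancel_right {u} A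
  have h2 : (2:ℤ) * ∑ A : Set V, cutVec A s(u,v) = 2 ^ Fintype.card V := by
    have hswap : ∀ A : Set V, cutVec A s(u,v) + cutVec (symmDiff A {u}) s(u,v) = 1 := by
      intro A
      have hu : u ∈ symmDiff A {u} ↔ ¬ (u ∈ A) := by
        simp [Set.mem_symmDiff]
      have hv : v ∈ symmDiff A {u} ↔ v ∈ A := by
        simp [Set.mem_symmDiff, huv.symm]
      rw [cutVec_mk, cutVec_mk, hu, hv]
      by_cases h1 : u ∈ A <;> by_cases h2 : v ∈ A <;> simp [h1, h2]
    have hre : (∑ A : Set V, cutVec (symmDiff A {u}) s(u,v)) = ∑ A : Set V, cutVec A s(u,v) := by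
      have := Equiv.sum_comp hinv.toPerm (fun A : Set V => cutVec A s(u,v))
      simpa [Function.Involutive.coe_toPerm] using this
    calc (2:ℤ) * ∑ A : Set V, cutVec A s(u,v)
        = ∑ A : Set V, (cutVec A s(u,v) + cutVec (symmDiff A {u}) s(u,v)) := by
          rw [Finset.sum_add_distrib, hre]; ring
      _ = ∑ _A : Set V, (1:ℤ) := Finset.sum_congr rfl (fun A _ => hswap A)
      _ = (Fintype.card (Set V) : ℤ) := by simp
      _ = 2 ^ Fintype.card V := by rw [Fintype.card_set]; push_cast; ring
  have hn : 1 ≤ Fintype.card V := Fintype.card_pos_iff.mpr ⟨u⟩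
  have h3 : (2:ℤ) ^ Fintype.card V = 2 * 2 ^ (Fintype.card V - 1) := by
    rw [← pow_succ']; congr 1; omega
  omega

lemma sum_gR :
    ∑ A : Set V, gR G A
      = ((fun _ => ((2:ℝ) ^ (Fintype.card V - 1))), ((2:ℝ) ^ Fintype.card V)) := by
  apply Prod.ext
  · simp only [Prod.fst_sum]
    funext e
    rw [Finset.sum_apply]
    obtain ⟨u, v, huv, he⟩ := edge_rep e
    have : ∀ A : Set V, (gR G A).1 e = ((cutVec A s(u,v) : ℤ) : ℝ) := by
      intro A; simp [gR, he]
    rw [Finset.sum_congr rfl (fun A _ => this A), ← Int.cast_sum,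
      sum_cutVec (G.ne_of_adj huv)]
    push_cast; ring
  · simp only [Prod.snd_sum]
    have : ∀ A : Set V, (gR G A).2 = (1:ℝ) := fun A => rfl
    rw [Finset.sum_congr rfl (fun A _ => this A)]
    simp [Fintype.card_set]

lemma interior_const {c : ℝ} (hc : 0 < c) :
    ((fun _ => c * 2 ^ (Fintype.card V - 1), c * 2 ^ Fintype.card V)
      : (G.edgeSet → ℝ) × ℝ) ∈ interior (cutCone G) := by
  have hsurj : Function.Surjective (Tlin G) := Tlin_surj
  have hT : Function.Surjective (LinearMap.toContinuousLinearMap (Tlin G)) := hsurj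
  have hopen : IsOpenMap (LinearMap.toContinuousLinearMap (Tlin G)) :=
    ContinuousLinearMap.isOpenMap _ hT
  set U : Set (Set V → ℝ) := {l | ∀ A, 0 < l A} with hU
  have hUopen : IsOpen U := by
    have : U = Set.pi Set.univ (fun _ => Set.Ioi (0:ℝ)) := by
      ext l; simp [Set.mem_pi, hU]
    rw [this]
    exact isOpen_set_pi Set.finite_univ (fun _ _ => isOpen_Ioi)
  have himg : (LinearMap.toContinuousLinearMap (Tlin G)) '' U ⊆ cutCone G := by
    rintro q ⟨l, hl, rfl⟩
    show Tlin G l ∈ cutCone G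
    rw [Tlin_apply]
    exact AddSubmonoid.sum_mem _ (fun A _ => smul_gR_mem_cone (le_of_lt (hl A)) A)
  have hmem : ((fun _ => c * 2 ^ (Fintype.card V - 1), c * 2 ^ Fintype.card V)
      : (G.edgeSet → ℝ) × ℝ) ∈ (LinearMap.toContinuousLinearMap (Tlin G)) '' U := by
    refine ⟨fun _ => c, fun A => hc, ?_⟩
    show Tlin G (fun _ => c) = _
    rw [Tlin_apply]
    rw [show (∑ A : Set V, (fun _ => c) A • gR G A) = c • ∑ A : Set V, gR G A by
      rw [Finset.smul_sum]]
    rw [sum_gR]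
    apply Prod.ext
    · funext e; simp
    · simp
  exact interior_maximal himg (hopen U hUopen) hmem

/-- The integral generator. -/
noncomputable def gZ (G : SimpleGraph V) (A : Set V) : (G.edgeSet → ℤ) × ℤ :=
  (fun e => cutVec A e.1, 1)

lemma gZ_mem_monoid (A : Set V) : gZ G A ∈ cutMonoid G :=
  AddSubmonoid.subset_closure ⟨A, rfl⟩

lemma gZ_mem_group (A : Set V) : gZ G A ∈ cutGroup G :=
  AddSubgroup.subset_closure ⟨A, rfl⟩

/-- Generic parity lemma: a ZMod-2 sum of edge coordinates which vanishes on all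
generators vanishes on the whole cut monoid. -/
lemma monoid_parity {m : ℕ} (E : Fin m → G.edgeSet)
    (hgen : ∀ A : Set V, (∑ i, ((cutVec A (E i).1 : ℤ) : ZMod 2)) = 0)
    {p : (G.edgeSet → ℤ) × ℤ} (hp : p ∈ cutMonoid G) :
    (∑ i, ((p.1 (E i) : ℤ) : ZMod 2)) = 0 := by
  induction hp using AddSubmonoid.closure_induction with
  | mem x hx =>
      obtain ⟨A, rfl⟩ := hx
      exact hgen A
  | zero => simp
  | add x y hxm hym hx hy =>
      have : ∑ i, (((x + y).1 (E i) : ℤ) : ZMod 2)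
          = (∑ i, ((x.1 (E i) : ℤ) : ZMod 2)) + ∑ i, ((y.1 (E i) : ℤ) : ZMod 2) := by
        rw [← Finset.sum_add_distrib]
        exact Finset.sum_congr rfl (fun i _ => by rw [Prod.fst_add, Pi.add_apply]; push_cast; ring)
      rw [this, hx, hy, add_zero]

lemma cutVec_zmod (A : Set V) (x y : V) :
    ((cutVec A s(x,y) : ℤ) : ZMod 2)
      = (if x ∈ A then 1 else 0) + (if y ∈ A then 1 else 0) := by
  rw [cutVec_mk]
  by_cases hx : x ∈ A <;> by_cases hy : y ∈ A <;> simp [hx, hy] <;> decide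

lemma gR_fst (A : Set V) (e : G.edgeSet) : (gR G A).1 e = ((cutVec A e.1 : ℤ) : ℝ) := rfl

lemma interior_snd_pos {p : (G.edgeSet → ℤ) × ℤ}
    (hp : toRealCut G p ∈ interior (cutCone G)) : 0 < p.2 := by
  have := interior_pos (LinearMap.snd ℝ (G.edgeSet → ℝ) ℝ)
    (fun A => by simp [gR]) ((0,1) : (G.edgeSet → ℝ) × ℝ) (by norm_num) hp
  simp only [LinearMap.snd_apply, toRealCut] at this
  exact_mod_cast this

lemma interior_coord_bounds {p : (G.edgeSet → ℤ) × ℤ}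
    (hp : toRealCut G p ∈ interior (cutCone G)) (e : G.edgeSet) :
    0 < p.1 e ∧ p.1 e < p.2 := by
  set φc : ((G.edgeSet → ℝ) × ℝ) →ₗ[ℝ] ℝ :=
    (LinearMap.proj e).comp (LinearMap.fst ℝ (G.edgeSet → ℝ) ℝ) with hφc
  have hφc_apply : ∀ q : (G.edgeSet → ℝ) × ℝ, φc q = q.1 e := fun q => rfl
  constructor
  · have := interior_pos φc
      (fun A => by rw [hφc_apply, gR_fst]; exact_mod_cast cutVec_nonneg A e.1)
      ((fun _ => (1:ℝ)), 0) (by rw [hφc_apply]; norm_num) hp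
    rw [hφc_apply] at this
    simp only [toRealCut] at this
    exact_mod_cast this
  · have := interior_pos (LinearMap.snd ℝ (G.edgeSet → ℝ) ℝ - φc)
      (fun A => by
        rw [LinearMap.sub_apply, hφc_apply, gR_fst]
        have : ((cutVec A e.1 : ℤ) : ℝ) ≤ 1 := by exact_mod_cast cutVec_le_one A e.1
        simp only [LinearMap.snd_apply, gR]
        linarith)
      ((0,1) : (G.edgeSet → ℝ) × ℝ)
      (by rw [LinearMap.sub_apply, hφc_apply]; norm_num) hp
    rw [LinearMap.sub_apply, hφc_apply] at this
    simp only [LinearMap.snd_apply, toRealCut] at this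
    have h2 : (p.1 e : ℝ) < (p.2 : ℝ) := by linarith
    exact_mod_cast h2

lemma triangle_facts {a b c : V} (hab : G.Adj a b) (hbc : G.Adj b c) (hac : G.Adj a c)
    {p : (G.edgeSet → ℤ) × ℤ} (hpm : p ∈ cutMonoid G)
    (hpi : toRealCut G p ∈ interior (cutCone G)) :
    ∃ x1 x2 x3 : ℤ, 0 < x1 ∧ x1 < p.2 ∧ 0 < x2 ∧ x2 < p.2 ∧ 0 < x3 ∧ x3 < p.2 ∧
      (2 ∣ (x1 + x2 + x3)) ∧ x1 + x2 + x3 < 2 * p.2 ∧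
      x1 < x2 + x3 ∧ x2 < x1 + x3 ∧ x3 < x1 + x2 := by
  set E1 : G.edgeSet := ⟨s(a,b), G.mem_edgeSet.mpr hab⟩ with hE1
  set E2 : G.edgeSet := ⟨s(b,c), G.mem_edgeSet.mpr hbc⟩ with hE2
  set E3 : G.edgeSet := ⟨s(a,c), G.mem_edgeSet.mpr hac⟩ with hE3
  refine ⟨p.1 E1, p.1 E2, p.1 E3, (interior_coord_bounds hpi E1).1,
    (interior_coord_bounds hpi E1).2, (interior_coord_bounds hpi E2).1,
    (interior_coord_bounds hpi E2).2, (interior_coord_bounds hpi E3).1,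
    (interior_coord_bounds hpi E3).2, ?_, ?_, ?_, ?_, ?_⟩
  · -- parity
    have hpar := monoid_parity ![E1, E2, E3] (fun A => by
      rw [Fin.sum_univ_three]
      show ((cutVec A s(a,b) : ℤ) : ZMod 2) + ((cutVec A s(b,c) : ℤ) : ZMod 2)
        + ((cutVec A s(a,c) : ℤ) : ZMod 2) = 0
      rw [cutVec_zmod, cutVec_zmod, cutVec_zmod]
      by_cases ha : a ∈ A <;> by_cases hb : b ∈ A <;> by_cases hc : c ∈ A <;>
        simp [ha, hb, hc] <;> decide) hpm
    rw [Fin.sum_univ_three] at hpar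
    simp only [Matrix.cons_val_zero, Matrix.cons_val_one, Matrix.cons_val_two,
      Matrix.head_cons, Matrix.tail_cons] at hpar
    show (2:ℤ) ∣ _
    have : (((p.1 E1 + p.1 E2 + p.1 E3 : ℤ)) : ZMod 2) = 0 := by push_cast; push_cast at hpar; linear_combination hpar
    exact_mod_cast (ZMod.intCast_zmod_eq_zero_iff_dvd _ 2).mp this
  all_goals {
    set φ1 : ((G.edgeSet → ℝ) × ℝ) →ₗ[ℝ] ℝ :=
      (LinearMap.proj E1).comp (LinearMap.fst ℝ (G.edgeSet → ℝ) ℝ) with hφ1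
    set φ2 : ((G.edgeSet → ℝ) × ℝ) →ₗ[ℝ] ℝ :=
      (LinearMap.proj E2).comp (LinearMap.fst ℝ (G.edgeSet → ℝ) ℝ) with hφ2
    set φ3 : ((G.edgeSet → ℝ) × ℝ) →ₗ[ℝ] ℝ :=
      (LinearMap.proj E3).comp (LinearMap.fst ℝ (G.edgeSet → ℝ) ℝ) with hφ3
    first
    | · -- 2*p.2 - sum > 0
        have := interior_pos ((2:ℝ) • LinearMap.snd ℝ (G.edgeSet → ℝ) ℝ - φ1 - φ2 - φ3)
          (fun A => by
            simp only [LinearMap.sub_apply, LinearMap.smul_apply, LinearMap.snd_apply,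
              hφ1, hφ2, hφ3, LinearMap.comp_apply, LinearMap.proj_apply,
              LinearMap.fst_apply, smul_eq_mul]
            show (0:ℝ) ≤ 2 * (gR G A).2 - (gR G A).1 E1 - (gR G A).1 E2 - (gR G A).1 E3
            rw [gR_fst, gR_fst, gR_fst]
            show (0:ℝ) ≤ 2 * 1 - ((cutVec A s(a,b) : ℤ):ℝ) - ((cutVec A s(b,c) : ℤ):ℝ)
              - ((cutVec A s(a,c) : ℤ):ℝ)
            rw [cutVec_mk, cutVec_mk, cutVec_mk]
            by_cases ha : a ∈ A <;> by_cases hb : b ∈ A <;> by_cases hc : c ∈ A <;>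
              simp [ha, hb, hc] <;> norm_num)
          ((0,1) : (G.edgeSet → ℝ) × ℝ) (by
            show (0:ℝ) < 2 * 1 - 0 - 0 - 0; norm_num) hpi
        show p.1 E1 + p.1 E2 + p.1 E3 < 2 * p.2
        have h2 : (0:ℝ) < 2 * (p.2:ℝ) - (p.1 E1 : ℝ) - (p.1 E2 : ℝ) - (p.1 E3 : ℝ) := this
        have h3 : ((p.1 E1 : ℝ)) + (p.1 E2 : ℝ) + (p.1 E3 : ℝ) < 2 * (p.2 : ℝ) := by linarith
        exact_mod_cast h3
    | · -- x1 < x2 + x3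
        have := interior_pos (φ2 + φ3 - φ1)
          (fun A => by
            show (0:ℝ) ≤ (gR G A).1 E2 + (gR G A).1 E3 - (gR G A).1 E1
            rw [gR_fst, gR_fst, gR_fst]
            show (0:ℝ) ≤ ((cutVec A s(b,c) : ℤ):ℝ) + ((cutVec A s(a,c) : ℤ):ℝ)
              - ((cutVec A s(a,b) : ℤ):ℝ)
            rw [cutVec_mk, cutVec_mk, cutVec_mk]
            by_cases ha : a ∈ A <;> by_cases hb : b ∈ A <;> by_cases hc : c ∈ A <;>
              simp [ha, hb, hc] <;> norm_num)
          ((fun _ => (1:ℝ)), 0) (by show (0:ℝ) < 1 + 1 - 1; norm_num) hpi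
        have h2 : (0:ℝ) < (p.1 E2 : ℝ) + (p.1 E3 : ℝ) - (p.1 E1 : ℝ) := this
        have h3 : ((p.1 E1 : ℝ)) < (p.1 E2 : ℝ) + (p.1 E3 : ℝ) := by linarith
        exact_mod_cast h3
    | · -- x2 < x1 + x3
        have := interior_pos (φ1 + φ3 - φ2)
          (fun A => by
            show (0:ℝ) ≤ (gR G A).1 E1 + (gR G A).1 E3 - (gR G A).1 E2
            rw [gR_fst, gR_fst, gR_fst]
            show (0:ℝ) ≤ ((cutVec A s(a,b) : ℤ):ℝ) + ((cutVec A s(a,c) : ℤ):ℝ)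
              - ((cutVec A s(b,c) : ℤ):ℝ)
            rw [cutVec_mk, cutVec_mk, cutVec_mk]
            by_cases ha : a ∈ A <;> by_cases hb : b ∈ A <;> by_cases hc : c ∈ A <;>
              simp [ha, hb, hc] <;> norm_num)
          ((fun _ => (1:ℝ)), 0) (by show (0:ℝ) < 1 + 1 - 1; norm_num) hpi
        have h2 : (0:ℝ) < (p.1 E1 : ℝ) + (p.1 E3 : ℝ) - (p.1 E2 : ℝ) := this
        have h3 : ((p.1 E2 : ℝ)) < (p.1 E1 : ℝ) + (p.1 E3 : ℝ) := by linarith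
        exact_mod_cast h3
    | · -- x3 < x1 + x2
        have := interior_pos (φ1 + φ2 - φ3)
          (fun A => by
            show (0:ℝ) ≤ (gR G A).1 E1 + (gR G A).1 E2 - (gR G A).1 E3
            rw [gR_fst, gR_fst, gR_fst]
            show (0:ℝ) ≤ ((cutVec A s(a,b) : ℤ):ℝ) + ((cutVec A s(b,c) : ℤ):ℝ)
              - ((cutVec A s(a,c) : ℤ):ℝ)
            rw [cutVec_mk, cutVec_mk, cutVec_mk]
            by_cases ha : a ∈ A <;> by_cases hb : b ∈ A <;> by_cases hc : c ∈ A <;>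
              simp [ha, hb, hc] <;> norm_num)
          ((fun _ => (1:ℝ)), 0) (by show (0:ℝ) < 1 + 1 - 1; norm_num) hpi
        have h2 : (0:ℝ) < (p.1 E1 : ℝ) + (p.1 E2 : ℝ) - (p.1 E3 : ℝ) := this
        have h3 : ((p.1 E3 : ℝ)) < (p.1 E1 : ℝ) + (p.1 E2 : ℝ) := by linarith
        exact_mod_cast h3
  }

lemma odd_cycle_no_two {n : ℕ} (hodd : Odd n) (hn : 3 ≤ n)
    (f : SimpleGraph.cycleGraph n ↪g G)
    {p : (G.edgeSet → ℤ) × ℤ} (hpm : p ∈ cutMonoid G)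
    (hpi : toRealCut G p ∈ interior (cutCone G)) (hp2 : p.2 = 2) : False := by
  haveI : NeZero n := ⟨by omega⟩
  have hone : (1 : Fin n).val = 1 := by
    rw [Fin.val_one']; exact Nat.mod_eq_of_lt (by omega)
  have hadj : ∀ i : Fin n, G.Adj (f i) (f (i + 1)) := by
    intro i
    apply f.map_rel_iff.mpr
    rw [SimpleGraph.cycleGraph_adj']
    right
    rw [show i + 1 - i = 1 from add_sub_cancel_left i 1, hone]
  set E : Fin n → G.edgeSet :=
    fun i => ⟨s(f i, f (i + 1)), G.mem_edgeSet.mpr (hadj i)⟩ with hE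
  have hgen : ∀ A : Set V, (∑ i, ((cutVec A (E i).1 : ℤ) : ZMod 2)) = 0 := by
    intro A
    have : ∀ i : Fin n, ((cutVec A (E i).1 : ℤ) : ZMod 2)
        = (if f i ∈ A then 1 else 0) + (if f (i + 1) ∈ A then 1 else 0) := by
      intro i
      exact cutVec_zmod A (f i) (f (i + 1))
    rw [Finset.sum_congr rfl (fun i _ => this i), Finset.sum_add_distrib]
    have hre : (∑ i : Fin n, (if f (i + 1) ∈ A then (1 : ZMod 2) else 0))
        = ∑ i : Fin n, (if f i ∈ A then (1 : ZMod 2) else 0) := by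
      exact Equiv.sum_comp (Equiv.addRight (1 : Fin n))
        (fun i => if f i ∈ A then (1 : ZMod 2) else 0)
    rw [hre]
    have h2 : ∀ x : ZMod 2, x + x = 0 := by decide
    exact h2 _
  have hpar := monoid_parity E hgen hpm
  have hcoord : ∀ i : Fin n, p.1 (E i) = 1 := by
    intro i
    have h := interior_coord_bounds hpi (E i)
    omega
  rw [Finset.sum_congr rfl (fun i _ => by rw [hcoord i])] at hpar
  simp only [Int.cast_one] at hpar
  rw [Finset.sum_const, Finset.card_univ, Fintype.card_fin] at hpar
  have : (n : ZMod 2) = 0 := by simpa using hpar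
  rw [show ((n : ZMod 2)) = ((n % 2 : ℕ) : ZMod 2) by rw [ZMod.natCast_mod],
    Nat.odd_iff.mp hodd] at this
  simp at this

lemma toReal_const (a : ℤ) (b : ℤ) :
    toRealCut G ((fun _ => a), b) = ((fun _ => (a:ℝ)), (b:ℝ)) := rfl

lemma card_pos_of_edge (hedge : G.edgeSet.Nonempty) : 1 ≤ Fintype.card V := by
  obtain ⟨e, he⟩ := hedge
  obtain ⟨u, v, huv, _⟩ := edge_rep (⟨e, he⟩ : G.edgeSet)
  exact Fintype.card_pos_iff.mpr ⟨u⟩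

lemma one_two_interior (hedge : G.edgeSet.Nonempty) :
    ((fun _ => (1:ℝ)), (2:ℝ)) ∈ interior (cutCone (G := G)) := by
  have hn : 1 ≤ Fintype.card V := card_pos_of_edge hedge
  set n := Fintype.card V
  have h2n : (2:ℝ) ^ n = 2 * 2 ^ (n - 1) := by
    rw [← pow_succ']; congr 1; omega
  have hc : (0:ℝ) < 2 / 2 ^ n := by positivity
  have := interior_const (G := G) hc
  convert this using 2
  · funext e
    rw [div_mul_eq_mul_div, h2n]
    field_simp
    rfl
  · field_simp
    rfl

lemma two_four_interior (hedge : G.edgeSet.Nonempty) :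
    ((fun _ => (2:ℝ)), (4:ℝ)) ∈ interior (cutCone (G := G)) := by
  have hn : 1 ≤ Fintype.card V := card_pos_of_edge hedge
  set n := Fintype.card V
  have h2n : (2:ℝ) ^ n = 2 * 2 ^ (n - 1) := by
    rw [← pow_succ']; congr 1; omega
  have hc : (0:ℝ) < 4 / 2 ^ n := by positivity
  have := interior_const (G := G) hc
  convert this using 2
  · funext e
    rw [div_mul_eq_mul_div, h2n]
    rw [show (4:ℝ) * 2 ^ (n-1) = 2 * (2 * 2 ^ (n-1)) by ring]
    rw [mul_div_assoc, div_self (by rw [← h2n]; positivity), mul_one]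
  · field_simp
    rfl

lemma bipartite_ones_mem (hbip : BipartiteG G) :
    (((fun _ => 1), 2) : (G.edgeSet → ℤ) × ℤ) ∈ cutMonoid G := by
  obtain ⟨s, hs⟩ := hbip
  have key : gZ G s + gZ G ∅ = (((fun _ => 1), 2) : (G.edgeSet → ℤ) × ℤ) := by
    apply Prod.ext
    · funext e
      obtain ⟨u, v, huv, he⟩ := edge_rep e
      show cutVec s e.1 + cutVec (∅ : Set V) e.1 = 1
      rw [he, cutVec_empty, add_zero, cutVec_mk]
      rcases hs huv with ⟨h1, h2⟩ | ⟨h1, h2⟩ <;> rw [if_neg (by tauto)]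
    · show (1:ℤ) + 1 = 2; norm_num
  rw [← key]
  exact AddSubmonoid.add_mem _ (gZ_mem_monoid s) (gZ_mem_monoid ∅)

noncomputable def singleZ (G : SimpleGraph V) (e : G.edgeSet) : (G.edgeSet → ℤ) × ℤ :=
  ((fun f => if f = e then 2 else 0), 1)

@[simp] lemma singleZ_fst (e f : G.edgeSet) :
    (singleZ G e).1 f = if f = e then (2:ℤ) else 0 := rfl
@[simp] lemma singleZ_snd (e : G.edgeSet) : (singleZ G e).2 = (1:ℤ) := rfl
@[simp] lemma gZ_fst (A : Set V) (e : G.edgeSet) : (gZ G A).1 e = cutVec A e.1 := rfl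
@[simp] lemma gZ_snd (A : Set V) : (gZ G A).2 = (1:ℤ) := rfl

lemma singleZ_mem_group (e : G.edgeSet) : singleZ G e ∈ cutGroup G := by
  obtain ⟨u, v, huv, he⟩ := edge_rep e
  have key : gZ G {u} + gZ G {v} - gZ G {u,v} = singleZ G e := by
    apply Prod.ext
    · funext f
      obtain ⟨x, y, hxy, hf⟩ := edge_rep f
      have hfe : (f = e) ↔ (s(x,y) = s(u,v)) := by
        rw [Subtype.ext_iff, hf, he]
      show cutVec {u} f.1 + cutVec {v} f.1 - cutVec {u,v} f.1
        = if f = e then (2:ℤ) else 0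
      rw [hf, cut_three (G.ne_of_adj huv) (G.ne_of_adj hxy)]
      by_cases h : s(x,y) = s(u,v)
      · rw [if_pos h, if_pos (hfe.mpr h)]
      · rw [if_neg h, if_neg (fun hh => h (hfe.mp hh))]
    · show (1:ℤ) + 1 - 1 = 1; norm_num
  rw [← key]
  exact AddSubgroup.sub_mem _
    (AddSubgroup.add_mem _ (gZ_mem_group _) (gZ_mem_group _)) (gZ_mem_group _)

lemma twos_mem_group :
    (((fun _ => 2), 4) : (G.edgeSet → ℤ) × ℤ) ∈ cutGroup G := by
  set m : ℤ := (Fintype.card G.edgeSet : ℤ) with hm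
  have key : (∑ e : G.edgeSet, singleZ G e) + (4 - m) • gZ G ∅
      = (((fun _ => 2), 4) : (G.edgeSet → ℤ) × ℤ) := by
    apply Prod.ext
    · simp only [Prod.fst_add, Prod.fst_sum, Prod.smul_fst]
      funext f
      simp only [Pi.add_apply, Finset.sum_apply, singleZ_fst, Pi.smul_apply, gZ_fst,
        cutVec_empty, smul_zero]
      rw [add_zero, Finset.sum_ite_eq Finset.univ f (fun _ => (2:ℤ))]
      simp
    · simp only [Prod.snd_add, Prod.snd_sum, Prod.smul_snd, singleZ_snd, gZ_snd,
        Finset.sum_const, Finset.card_univ, smul_eq_mul, mul_one, nsmul_eq_mul]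
      show (Fintype.card G.edgeSet : ℤ) + (4 - m) = 4
      omega
  rw [← key]
  exact AddSubgroup.add_mem _
    (AddSubgroup.sum_mem _ (fun e _ => singleZ_mem_group e))
    (AddSubgroup.zsmul_mem _ (gZ_mem_group ∅) _)

lemma twos_smul_mem_monoid (hcard : 2 ≤ Fintype.card V) :
    (2 ^ (Fintype.card V - 2)) • (((fun _ => 2), 4) : (G.edgeSet → ℤ) × ℤ)
      ∈ cutMonoid G := by
  set n := Fintype.card V
  have key : (2 ^ (n - 2)) • (((fun _ => 2), 4) : (G.edgeSet → ℤ) × ℤ)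
      = ∑ A : Set V, gZ G A := by
    apply Prod.ext
    · simp only [Prod.smul_fst, Prod.fst_sum]
      funext e
      obtain ⟨u, v, huv, he⟩ := edge_rep e
      simp only [Pi.smul_apply, Finset.sum_apply, gZ_fst, smul_eq_mul, nsmul_eq_mul]
      rw [Finset.sum_congr rfl (fun A (_ : A ∈ Finset.univ) =>
        show cutVec A e.1 = cutVec A s(u,v) by rw [he])]
      rw [sum_cutVec (G.ne_of_adj huv)]
      obtain ⟨k, hk⟩ : ∃ k, n = k + 2 := ⟨n - 2, by omega⟩
      rw [show Fintype.card V = n from rfl, hk]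
      norm_num
      push_cast
      ring
    · rw [Prod.smul_snd, Prod.snd_sum]
      simp only [gZ_snd, Finset.sum_const, Finset.card_univ, Fintype.card_set,
        smul_eq_mul, mul_one, nsmul_eq_mul]
      obtain ⟨k, hk⟩ : ∃ k, n = k + 2 := ⟨n - 2, by omega⟩
      rw [show Fintype.card V = n from rfl, hk, Nat.add_sub_cancel, pow_add]
      push_cast
      ring
  rw [key]
  exact AddSubmonoid.sum_mem _ (fun A _ => gZ_mem_monoid A)

end Aux

/-- For a graph `G` with at least one edge and normal cut monoid:
(a) if `G` is bipartite then `m(G) = 2`; (b) if `G` has no triangle but has an induced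
cycle of odd length then `m(G) ≥ 3`; (c) if `G` contains a triangle then `m(G) = 4`. -/
theorem regularity_main {V : Type} [Fintype V] (G : SimpleGraph V)
    (hedge : G.edgeSet.Nonempty) (hnorm : CutNormal G) :
    (BipartiteG G → IsLeast (cutDegrees G) 2) ∧
    ((¬ HasTriangle G ∧ ∃ n, Odd n ∧ HasInducedCycleLen G n) →
      ∀ b ∈ cutDegrees G, 3 ≤ b) ∧
    (HasTriangle G → IsLeast (cutDegrees G) 4) := by
  classical
  obtain ⟨e0v, he0⟩ := hedge
  set e0 : G.edgeSet := ⟨e0v, he0⟩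
  -- general lower bound: every b ∈ cutDegrees G satisfies 2 ≤ b
  have hlow2 : ∀ b ∈ cutDegrees G, 2 ≤ b := by
    intro b hb
    obtain ⟨x, hm, hi⟩ := hb
    have h1 := interior_coord_bounds hi e0
    simp only at h1
    omega
  refine ⟨?_, ?_, ?_⟩
  · -- bipartite
    intro hbip
    constructor
    · refine ⟨fun _ => 1, ?_, ?_⟩
      · show (((fun _ => 1), ((2:ℕ):ℤ)) : (G.edgeSet → ℤ) × ℤ) ∈ cutMonoid G
        have : (((2:ℕ):ℤ)) = (2:ℤ) := by norm_num
        rw [this]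
        exact bipartite_ones_mem hbip
      · show toRealCut G ((fun _ => 1), ((2:ℕ):ℤ)) ∈ interior (cutCone G)
        have : toRealCut G (((fun _ => 1), ((2:ℕ):ℤ)) : (G.edgeSet → ℤ) × ℤ)
            = (((fun _ => (1:ℝ)), (2:ℝ)) : (G.edgeSet → ℝ) × ℝ) := by
          apply Prod.ext
          · funext e; show ((1:ℤ):ℝ) = 1; norm_num
          · show ((((2:ℕ):ℤ)):ℝ) = 2; norm_num
        rw [this]
        exact one_two_interior ⟨e0v, he0⟩
    · exact hlow2
  · -- odd induced cycle, no triangle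
    rintro ⟨-, n, hodd, hn3, ⟨f⟩⟩ b hb
    have h2 := hlow2 b hb
    rcases Nat.lt_or_ge b 3 with hlt | hge
    · exfalso
      have hb2 : b = 2 := by omega
      subst hb2
      obtain ⟨x, hm, hi⟩ := hb
      exact odd_cycle_no_two hodd hn3 f hm hi (by norm_num)
    · exact hge
  · -- triangle
    rintro ⟨a, b, c, hab, hbc, hac⟩
    have hcard : 2 ≤ Fintype.card V :=
      Fintype.one_lt_card_iff_nontrivial.mpr ⟨⟨a, b, G.ne_of_adj hab⟩⟩
    constructor
    · refine ⟨fun _ => 2, ?_, ?_⟩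
      · show (((fun _ => 2), ((4:ℕ):ℤ)) : (G.edgeSet → ℤ) × ℤ) ∈ cutMonoid G
        have h4 : (((4:ℕ):ℤ)) = (4:ℤ) := by norm_num
        rw [h4]
        apply hnorm _ twos_mem_group
        exact ⟨2 ^ (Fintype.card V - 2), Nat.one_le_two_pow, twos_smul_mem_monoid hcard⟩
      · show toRealCut G ((fun _ => 2), ((4:ℕ):ℤ)) ∈ interior (cutCone G)
        have : toRealCut G (((fun _ => 2), ((4:ℕ):ℤ)) : (G.edgeSet → ℤ) × ℤ)
            = (((fun _ => (2:ℝ)), (4:ℝ)) : (G.edgeSet → ℝ) × ℝ) := by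
          apply Prod.ext
          · funext e; show ((2:ℤ):ℝ) = 2; norm_num
          · show ((((4:ℕ):ℤ)):ℝ) = 4; norm_num
        rw [this]
        exact two_four_interior ⟨e0v, he0⟩
    · intro d hd
      obtain ⟨x, hm, hi⟩ := hd
      obtain ⟨x1, x2, x3, h1, h2, h3, h4, h5, h6, h7, h8, h9, h10, h11⟩ :=
        triangle_facts hab hbc hac hm hi
      simp only at h1 h2 h3 h4 h5 h6 h7 h8 h9 h10 h11
      omega
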